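/- The quaternionic Hopf map h : S⁷ → ℙ(ℍ²) is a locally trivial fiber bundle with fiber the 3-sphere of unit quaternions: every point of ℙ(ℍ²) has an open neighborhood U together with a homeomorphism h⁻¹(U) ≃ U × {q ∈ ℍ : ‖q‖ = 1} commuting with the projections to U. -/

import Mathlib

/-!
STATEMENT 4: The quaternionic Hopf map `h : S⁷ → ℙ(ℍ²)` is a locally trivial fiber
bundle with fiber the 3-sphere of unit quaternions: every point of `ℙ(ℍ²)` has an
open neighborhood `U` together with a homeomorphism `h⁻¹(U) ≃ U × {q ∈ ℍ : ‖q‖ = 1}`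
commuting with the projections to `U`.
-/

open scoped LinearAlgebra.Projectivization

noncomputable section

local notation "ℍ" => Quaternion ℝ

/-- `ℍ²`: the product `ℍ × ℍ` with the L² (Euclidean) norm, a left `ℍ`-module. -/
abbrev H2 : Type := WithLp 2 (ℍ × ℍ)

/-- The quotient topology on the projectivization `ℙ ℍ ℍ²`. -/
instance : TopologicalSpace (ℙ ℍ H2) :=
  inferInstanceAs (TopologicalSpace (Quotient (projectivizationSetoid ℍ H2)))

/-- `S⁷`: the unit sphere of `ℍ²`, with the subspace topology. -/
abbrev S7 : Type := Metric.sphere (0 : H2) 1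

/-- The quaternionic Hopf map, sending a unit vector `v ∈ S⁷ ⊆ ℍ²` to its
equivalence class `[v] ∈ ℙ(ℍ²)`, i.e. to the quaternionic line it spans. -/
def hopf (v : S7) : ℙ ℍ H2 :=
  Projectivization.mk ℍ (v : H2) (by
    have hv : ‖(v : H2)‖ = 1 := mem_sphere_zero_iff_norm.mp v.2
    intro h
    rw [h] at hv
    simp at hv)

section Aux
open Topology

abbrev T : Type := {v : H2 // v ≠ 0}

def pr (w : T) : ℙ ℍ H2 := Projectivization.mk ℍ w.1 w.2

lemma surjective_pr : Function.Surjective pr :=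
  fun ℓ => ⟨⟨ℓ.rep, ℓ.rep_nonzero⟩, ℓ.mk_rep⟩

lemma continuous_pr : Continuous pr := continuous_quotient_mk'

lemma isQuotientMap_pr : IsQuotientMap pr := isQuotientMap_quotient_mk'

lemma pr_eq_pr_iff (v w : T) : pr v = pr w ↔ ∃ a : ℍˣ, a • w.1 = v.1 := by
  exact Projectivization.mk_eq_mk_iff ℍ v.1 w.1 v.2 w.2

lemma isOpenMap_pr : IsOpenMap pr := by
  intro s hs
  rw [← isQuotientMap_pr.isOpen_preimage]
  have key : pr ⁻¹' (pr '' s) = ⋃ a : ℍˣ, (fun w : T => (⟨(a : ℍ) • w.1,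
      fun h0 => w.2 (by simpa [smul_eq_zero, Units.ne_zero] using h0)⟩ : T)) ⁻¹' s := by
    ext w
    simp only [Set.mem_preimage, Set.mem_image, Set.mem_iUnion]
    constructor
    · rintro ⟨v, hv, hvw⟩
      obtain ⟨a, ha⟩ := (pr_eq_pr_iff v w).mp hvw
      refine ⟨a, ?_⟩
      convert hv using 1
      exact Subtype.ext ha
    · rintro ⟨a, ha⟩
      refine ⟨_, ha, ?_⟩
      exact ((pr_eq_pr_iff _ w).mpr ⟨a, rfl⟩)
  rw [key]
  refine isOpen_iUnion fun a => hs.preimage ?_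
  exact ((continuous_const_smul (a : ℍ)).comp continuous_subtype_val).subtype_mk _

lemma isOpenQuotientMap_pr : IsOpenQuotientMap pr :=
  ⟨surjective_pr, continuous_pr, isOpenMap_pr⟩

section Triv
variable (f : H2 → ℍ)

def Uset : Set (ℙ ℍ H2) := {ℓ | f ℓ.rep ≠ 0}

variable (hsmul : ∀ (c : ℍ) (v : H2), f (c • v) = c * f v)

include hsmul in
lemma mem_Uset_mk (v : H2) (hv : v ≠ 0) :
    Projectivization.mk ℍ v hv ∈ Uset f ↔ f v ≠ 0 := by
  obtain ⟨a, ha⟩ := Projectivization.exists_smul_eq_mk_rep ℍ v hv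
  have : f (Projectivization.mk ℍ v hv).rep = (a : ℍ) * f v := by
    rw [← ha, Units.smul_def, hsmul]
  simp only [Uset, Set.mem_setOf_eq, this]
  constructor
  · intro h hf0; exact h (by rw [hf0, mul_zero])
  · intro h h0
    exact h (by
      have := congrArg (fun x => ((a⁻¹ : ℍˣ) : ℍ) * x) h0
      simpa [← mul_assoc] using this)

variable (hf : Continuous f)

include hsmul in
lemma pr_preimage_Uset : pr ⁻¹' Uset f = {w : T | f w.1 ≠ 0} := by
  ext w
  exact mem_Uset_mk f hsmul w.1 w.2

include hsmul hf in
lemma isOpen_Uset : IsOpen (Uset f) := by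
  rw [← isQuotientMap_pr.isOpen_preimage, pr_preimage_Uset f hsmul]
  exact isOpen_compl_singleton.preimage (hf.comp continuous_subtype_val)

/-- The scaling quaternion. -/
def sc (w : H2) (q : ℍ) : ℍ := (‖w‖⁻¹ * ‖f w‖) • (q * (f w)⁻¹)

include hsmul in
lemma key_invariance (a b : T) (t : ℍ) (hab : (a : H2) = t • (b : H2)) (q : ℍ) :
    sc f a.1 q • a.1 = sc f b.1 q • b.1 := by
  have ht : t ≠ 0 := fun h0 => a.2 (by rw [hab, h0, zero_smul])
  have hb : (b : H2) ≠ 0 := b.2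
  have h1 : f (a : H2) = t * f b.1 := by rw [hab, hsmul]
  have hna : ‖(a : H2)‖ = ‖t‖ * ‖b.1‖ := by rw [hab, norm_smul]
  have hnt : ‖t‖ ≠ 0 := norm_ne_zero_iff.mpr ht
  have hnb : ‖(b : H2)‖ ≠ 0 := norm_ne_zero_iff.mpr hb
  rw [sc, sc, h1, hna, hab, mul_inv_rev t (f b.1), norm_mul, smul_assoc, smul_assoc,
    smul_smul (q * ((f b.1)⁻¹ * t⁻¹)) t]
  have e1 : q * ((f b.1)⁻¹ * t⁻¹) * t = q * (f b.1)⁻¹ := by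
    rw [mul_assoc q, mul_assoc, inv_mul_cancel₀ ht, mul_one]
  have e2 : (‖t‖ * ‖(b : H2)‖)⁻¹ * (‖t‖ * ‖f b.1‖) = ‖(b : H2)‖⁻¹ * ‖f b.1‖ := by
    field_simp
  rw [e1, e2]

include hsmul in
lemma key_inv' : ∀ (a b : T) (t : ℍ), (a : H2) = t • (b : H2) →
    (fun q => sc f a.1 q • a.1) = (fun q => sc f b.1 q • b.1) := by
  intro a b t h
  funext q
  exact key_invariance f hsmul a b t h q

def Phi : ℙ ℍ H2 → ℍ → H2 :=
  Projectivization.lift (fun w : T => fun q => sc f w.1 q • w.1) (key_inv' f hsmul)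

lemma Phi_mk (v : H2) (hv : v ≠ 0) (q : ℍ) :
    Phi f hsmul (Projectivization.mk ℍ v hv) q = sc f v q • v := rfl

-- pointwise computations
variable {v : H2} {q : ℍ}

lemma norm_sc (hfv : f v ≠ 0) (hq : ‖q‖ = 1) : ‖sc f v q‖ = ‖v‖⁻¹ := by
  have h0 : (0:ℝ) ≤ ‖v‖⁻¹ * ‖f v‖ := by positivity
  rw [sc, norm_smul, Real.norm_eq_abs, abs_of_nonneg h0, norm_mul, norm_inv, hq, one_mul,
    mul_assoc, mul_inv_cancel₀ (norm_ne_zero_iff.mpr hfv), mul_one]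

include hsmul in
lemma f_sc_smul (hfv : f v ≠ 0) : f (sc f v q • v) = (‖v‖⁻¹ * ‖f v‖) • q := by
  rw [hsmul, sc, smul_mul_assoc, mul_assoc, inv_mul_cancel₀ hfv, mul_one]

lemma sc_ne_zero (hv : v ≠ 0) (hfv : f v ≠ 0) (hq : ‖q‖ = 1) : sc f v q ≠ 0 := by
  intro h0
  have := norm_sc f hfv hq
  rw [h0, norm_zero] at this
  exact (inv_ne_zero (norm_ne_zero_iff.mpr hv)) this.symm


lemma norm_one_S7 (v : S7) : ‖(v : H2)‖ = 1 := mem_sphere_zero_iff_norm.mp v.2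

lemma ne_zero_S7 (v : S7) : (v : H2) ≠ 0 := by
  intro h0
  have h1 := norm_one_S7 v
  rw [h0, norm_zero] at h1
  exact zero_ne_one h1

include hsmul in
lemma Phi_rep (ℓ' : ℙ ℍ H2) (q : ℍ) :
    Phi f hsmul ℓ' q = sc f ℓ'.rep q • ℓ'.rep := by
  conv_lhs => rw [← ℓ'.mk_rep]
  exact Phi_mk f hsmul ℓ'.rep ℓ'.rep_nonzero q

include hsmul in
lemma norm_Phi (ℓ' : ℙ ℍ H2) (hℓ' : f ℓ'.rep ≠ 0) (q : ℍ) (hq : ‖q‖ = 1) :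
    ‖Phi f hsmul ℓ' q‖ = 1 := by
  rw [Phi_rep f hsmul, norm_smul, norm_sc f hℓ' hq,
    inv_mul_cancel₀ (norm_ne_zero_iff.mpr ℓ'.rep_nonzero)]

include hsmul in
lemma mk_Phi (ℓ' : ℙ ℍ H2) (hℓ' : f ℓ'.rep ≠ 0) (q : ℍ) (hq : ‖q‖ = 1)
    (h0 : Phi f hsmul ℓ' q ≠ 0) :
    Projectivization.mk ℍ (Phi f hsmul ℓ' q) h0 = ℓ' := by
  conv_rhs => rw [← ℓ'.mk_rep]
  rw [Projectivization.mk_eq_mk_iff]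
  exact ⟨Units.mk0 _ (sc_ne_zero f ℓ'.rep_nonzero hℓ' hq), (Phi_rep f hsmul ℓ' q).symm⟩

include hsmul in
lemma f_Phi (ℓ' : ℙ ℍ H2) (hℓ' : f ℓ'.rep ≠ 0) (q : ℍ) :
    f (Phi f hsmul ℓ' q) = (‖ℓ'.rep‖⁻¹ * ‖f ℓ'.rep‖) • q := by
  rw [Phi_rep f hsmul, f_sc_smul f hsmul hℓ']

include hsmul in
lemma fiber_Phi (ℓ' : ℙ ℍ H2) (hℓ' : f ℓ'.rep ≠ 0) (q : ℍ) (hq : ‖q‖ = 1) :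
    ‖f (Phi f hsmul ℓ' q)‖⁻¹ • f (Phi f hsmul ℓ' q) = q := by
  rw [f_Phi f hsmul ℓ' hℓ']
  have hr : 0 < ‖ℓ'.rep‖⁻¹ * ‖f ℓ'.rep‖ :=
    mul_pos (inv_pos.mpr (norm_pos_iff.mpr ℓ'.rep_nonzero)) (norm_pos_iff.mpr hℓ')
  rw [norm_smul, Real.norm_eq_abs, abs_of_pos hr, hq, mul_one, smul_smul,
    inv_mul_cancel₀ hr.ne', one_smul]

include hsmul in
lemma Phi_hopf (v : S7) (hfv : f (v : H2) ≠ 0) :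
    Phi f hsmul (hopf v) (‖f (v : H2)‖⁻¹ • f (v : H2)) = (v : H2) := by
  rw [show Phi f hsmul (hopf v) (‖f (v : H2)‖⁻¹ • f (v : H2))
      = sc f (v : H2) (‖f (v : H2)‖⁻¹ • f (v : H2)) • (v : H2) from rfl]
  rw [sc, norm_one_S7 v, smul_mul_assoc, mul_inv_cancel₀ hfv, inv_one, one_mul,
    smul_smul, mul_inv_cancel₀ (norm_ne_zero_iff.mpr hfv), one_smul, one_smul]

include hsmul in
lemma f_ne_zero_of_memD (v : (hopf ⁻¹' Uset f : Set S7)) : f (v.1 : H2) ≠ 0 :=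
  (mem_Uset_mk f hsmul _ (ne_zero_S7 v.1)).mp v.2

/-- The forward map of the trivialization. -/
def fwdMap (v : (hopf ⁻¹' Uset f : Set S7)) : (Uset f) × Metric.sphere (0 : ℍ) 1 :=
  (⟨hopf v.1, v.2⟩, ⟨‖f (v.1 : H2)‖⁻¹ • f (v.1 : H2), by
    rw [mem_sphere_zero_iff_norm, norm_smul, Real.norm_eq_abs, abs_of_nonneg
      (inv_nonneg.mpr (norm_nonneg _)), inv_mul_cancel₀
      (norm_ne_zero_iff.mpr (f_ne_zero_of_memD f hsmul v))]⟩)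

omit hsmul in
lemma norm_q (x : (Uset f) × Metric.sphere (0 : ℍ) 1) : ‖(x.2 : ℍ)‖ = 1 :=
  mem_sphere_zero_iff_norm.mp x.2.2

/-- The backward map of the trivialization (underlying S7 point). -/
def bwdVec (x : (Uset f) × Metric.sphere (0 : ℍ) 1) : S7 :=
  ⟨Phi f hsmul x.1.1 x.2.1, by
    rw [mem_sphere_zero_iff_norm]
    exact norm_Phi f hsmul x.1.1 x.1.2 x.2.1 (norm_q f x)⟩

lemma hopf_bwdVec (x : (Uset f) × Metric.sphere (0 : ℍ) 1) :
    hopf (bwdVec f hsmul x) = x.1.1 :=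
  mk_Phi f hsmul x.1.1 x.1.2 x.2.1 (norm_q f x) (ne_zero_S7 (bwdVec f hsmul x))

def bwdMap (x : (Uset f) × Metric.sphere (0 : ℍ) 1) : (hopf ⁻¹' Uset f : Set S7) :=
  ⟨bwdVec f hsmul x, by
    have := hopf_bwdVec f hsmul x
    simp only [Set.mem_preimage, this]
    exact x.1.2⟩

lemma bwd_fwd (v : (hopf ⁻¹' Uset f : Set S7)) : bwdMap f hsmul (fwdMap f hsmul v) = v := by
  apply Subtype.ext
  apply Subtype.ext
  show Phi f hsmul (hopf v.1) (‖f (v.1 : H2)‖⁻¹ • f (v.1 : H2)) = (v.1 : H2)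
  exact Phi_hopf f hsmul v.1 (f_ne_zero_of_memD f hsmul v)

lemma fwd_bwd (x : (Uset f) × Metric.sphere (0 : ℍ) 1) :
    fwdMap f hsmul (bwdMap f hsmul x) = x := by
  apply Prod.ext
  · exact Subtype.ext (hopf_bwdVec f hsmul x)
  · apply Subtype.ext
    show ‖f (Phi f hsmul x.1.1 x.2.1)‖⁻¹ • f (Phi f hsmul x.1.1 x.2.1) = (x.2 : ℍ)
    exact fiber_Phi f hsmul x.1.1 x.1.2 x.2.1 (norm_q f x)

lemma isOpenQuotientMap_rho (U : Set (ℙ ℍ H2)) (hU : IsOpen U) :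
    IsOpenQuotientMap (fun w : (pr ⁻¹' U) => (⟨pr w.1, w.2⟩ : U)) := by
  refine ⟨?_, ?_, ?_⟩
  · rintro ⟨u, hu⟩
    obtain ⟨w, rfl⟩ := surjective_pr u
    exact ⟨⟨w, hu⟩, rfl⟩
  · exact (continuous_pr.comp continuous_subtype_val).subtype_mk _
  · intro s hs
    have hVopen : IsOpen (pr ⁻¹' U) := hU.preimage continuous_pr
    have hso : IsOpen (Subtype.val '' s) := hVopen.isOpenMap_subtype_val s hs
    have himg : IsOpen (pr '' (Subtype.val '' s)) := isOpenMap_pr _ hso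
    have heq : (fun w : (pr ⁻¹' U) => (⟨pr w.1, w.2⟩ : U)) '' s
        = Subtype.val ⁻¹' (pr '' (Subtype.val '' s)) := by
      ext x
      simp only [Set.mem_image, Set.mem_preimage]
      constructor
      · rintro ⟨w, hw, rfl⟩
        exact ⟨w.1, ⟨w, hw, rfl⟩, rfl⟩
      · rintro ⟨w, ⟨y, hy, rfl⟩, hx⟩
        exact ⟨y, hy, Subtype.ext hx⟩
    rw [heq]
    exact himg.preimage continuous_subtype_val

lemma continuous_hopf : Continuous hopf := by
  have : Continuous fun v : S7 => pr ⟨(v : H2), ne_zero_S7 v⟩ :=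
    continuous_pr.comp (continuous_subtype_val.subtype_mk _)
  exact this

include hf hsmul in
lemma continuous_fwdMap : Continuous (fwdMap f hsmul) := by
  have hval : Continuous fun v : (hopf ⁻¹' Uset f : Set S7) => (v.1 : H2) :=
    continuous_subtype_val.comp continuous_subtype_val
  have hfv : Continuous fun v : (hopf ⁻¹' Uset f : Set S7) => f (v.1 : H2) := hf.comp hval
  refine Continuous.prodMk ?_ ?_
  · exact ((continuous_hopf.comp continuous_subtype_val).subtype_mk _)
  · refine Continuous.subtype_mk ?_ _
    exact ((hfv.norm.inv₀ fun v =>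
      norm_ne_zero_iff.mpr (f_ne_zero_of_memD f hsmul v)).smul hfv)

include hf hsmul in
lemma continuous_bwdMap : Continuous (bwdMap f hsmul) := by
  have hU : IsOpen (Uset f) := isOpen_Uset f hsmul hf
  have hOQ : IsOpenQuotientMap
      (Prod.map (fun w : (pr ⁻¹' Uset f) => (⟨pr w.1, w.2⟩ : Uset f))
        (id : Metric.sphere (0 : ℍ) 1 → Metric.sphere (0 : ℍ) 1)) :=
    (isOpenQuotientMap_rho (Uset f) hU).prodMap IsOpenQuotientMap.id
  rw [← hOQ.continuous_comp_iff]
  -- the composite is the concrete map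
  have hval : Continuous fun p : (pr ⁻¹' Uset f) × Metric.sphere (0 : ℍ) 1 =>
      (p.1.1.1 : H2) :=
    continuous_subtype_val.comp (continuous_subtype_val.comp continuous_fst)
  have hfC : Continuous fun p : (pr ⁻¹' Uset f) × Metric.sphere (0 : ℍ) 1 =>
      f (p.1.1.1 : H2) := hf.comp hval
  have hfne : ∀ p : (pr ⁻¹' Uset f) × Metric.sphere (0 : ℍ) 1, f (p.1.1.1 : H2) ≠ 0 :=
    fun p => (mem_Uset_mk f hsmul _ p.1.1.2).mp p.1.2
  have hvne : ∀ p : (pr ⁻¹' Uset f) × Metric.sphere (0 : ℍ) 1, ‖(p.1.1.1 : H2)‖ ≠ 0 :=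
    fun p => norm_ne_zero_iff.mpr p.1.1.2
  have hq : Continuous fun p : (pr ⁻¹' Uset f) × Metric.sphere (0 : ℍ) 1 => (p.2 : ℍ) :=
    continuous_subtype_val.comp continuous_snd
  have hsc : Continuous fun p : (pr ⁻¹' Uset f) × Metric.sphere (0 : ℍ) 1 =>
      sc f (p.1.1.1 : H2) (p.2 : ℍ) := by
    unfold sc
    exact ((hval.norm.inv₀ hvne).mul hfC.norm).smul (hq.mul (hfC.inv₀ hfne))
  have hcore : Continuous fun p : (pr ⁻¹' Uset f) × Metric.sphere (0 : ℍ) 1 =>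
      sc f (p.1.1.1 : H2) (p.2 : ℍ) • (p.1.1.1 : H2) := hsc.smul hval
  exact (hcore.subtype_mk _).subtype_mk _

include hsmul hf in
theorem main_triv (ℓ : ℙ ℍ H2) (hℓ : f ℓ.rep ≠ 0) :
    ∃ U : Set (ℙ ℍ H2), IsOpen U ∧ ℓ ∈ U ∧
      ∃ e : (hopf ⁻¹' U : Set S7) ≃ₜ U × Metric.sphere (0 : ℍ) 1,
        ∀ v : (hopf ⁻¹' U : Set S7), ((e v).1 : ℙ ℍ H2) = hopf (v : S7) := by
  refine ⟨Uset f, isOpen_Uset f hsmul hf, hℓ, ?_⟩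
  refine ⟨⟨⟨fwdMap f hsmul, bwdMap f hsmul, bwd_fwd f hsmul, fwd_bwd f hsmul⟩,
    continuous_fwdMap f hsmul hf, continuous_bwdMap f hsmul hf⟩, fun v => rfl⟩

end Triv

-- the two coordinate functions
def c1 (v : H2) : ℍ := (WithLp.equiv 2 (ℍ × ℍ) v).1
def c2 (v : H2) : ℍ := (WithLp.equiv 2 (ℍ × ℍ) v).2

lemma c1_smul : ∀ (c : ℍ) (v : H2), c1 (c • v) = c * c1 v := by
  intro c v; simp [c1, WithLp.ofLp_smul]
lemma c2_smul : ∀ (c : ℍ) (v : H2), c2 (c • v) = c * c2 v := by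
  intro c v; simp [c2, WithLp.ofLp_smul]
lemma c1_cont : Continuous c1 := continuous_fst.comp (WithLp.prod_continuous_ofLp _ _ _)
lemma c2_cont : Continuous c2 := continuous_snd.comp (WithLp.prod_continuous_ofLp _ _ _)


end Aux

theorem hopf_locally_trivial (ℓ : ℙ ℍ H2) :
    ∃ U : Set (ℙ ℍ H2), IsOpen U ∧ ℓ ∈ U ∧
      ∃ e : (hopf ⁻¹' U : Set S7) ≃ₜ U × Metric.sphere (0 : ℍ) 1,
        ∀ v : (hopf ⁻¹' U : Set S7), ((e v).1 : ℙ ℍ H2) = hopf (v : S7) := by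
  have hne : c1 ℓ.rep ≠ 0 ∨ c2 ℓ.rep ≠ 0 := by
    by_contra h
    push_neg at h
    apply ℓ.rep_nonzero
    have : WithLp.equiv 2 (ℍ × ℍ) ℓ.rep = 0 := Prod.ext h.1 h.2
    simpa using (WithLp.equiv 2 (ℍ × ℍ)).injective (by simpa using this)
  rcases hne with h | h
  · exact main_triv c1 c1_smul c1_cont ℓ h
  · exact main_triv c2 c2_smul c2_cont ℓ h
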